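/- Let n ≥ 3 and let V = {S ∈ Matₙ(ℂ) : Sᵀ = S} be the symmetric n×n complex matrices, on which the orthogonal Lie algebra so(n,ℂ) = {A ∈ Matₙ(ℂ) : Aᵀ = −A} acts by S ↦ AS + SAᵀ = [A, S]. Then every skew-curvature tensor of this representation vanishes: if R : V × V → so(n,ℂ) is a symmetric bilinear map satisfying [R(X,Y), Z] + [R(Y,Z), X] + [R(Z,X), Y] = 0 for all X, Y, Z ∈ V, then R = 0. (That is, 𝓡̄(so(n,ℂ) acting on ⊙²ℂⁿ) = 0.) -/

import Mathlib

open Matrix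

/-- The space `⊙²ℂⁿ` of symmetric `n × n` complex matrices. -/
noncomputable def symMat (n : ℕ) : Submodule ℂ (Matrix (Fin n) (Fin n) ℂ) where
  carrier := {S | Sᵀ = S}
  add_mem' := by
    intro a b ha hb
    simp only [Set.mem_setOf_eq] at *
    rw [Matrix.transpose_add, ha, hb]
  zero_mem' := by
    simp only [Set.mem_setOf_eq, Matrix.transpose_zero]
  smul_mem' := by
    intro c a ha
    simp only [Set.mem_setOf_eq] at *
    rw [Matrix.transpose_smul, ha]

/-- The diagonal matrix with a single `1` in position `(k,k)`, as an element of `symMat n`. -/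
noncomputable def eD (n : ℕ) (k : Fin n) : symMat n :=
  ⟨Matrix.diagonal (Pi.single k (1 : ℂ)), by
    show (Matrix.diagonal (Pi.single k (1 : ℂ)))ᵀ = _
    simp⟩

lemma lieD {n : ℕ} (A : Matrix (Fin n) (Fin n) ℂ) (k p q : Fin n) :
    ⁅A, ((eD n k : symMat n) : Matrix (Fin n) (Fin n) ℂ)⁆ p q
      = A p q * ((Pi.single k (1 : ℂ) : Fin n → ℂ) q - (Pi.single k (1 : ℂ) : Fin n → ℂ) p) := by
  show ⁅A, Matrix.diagonal (Pi.single k (1 : ℂ))⁆ p q = _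
  simp only [Ring.lie_def, Matrix.sub_apply, Matrix.mul_diagonal, Matrix.diagonal_mul]
  ring

/-- for `n ≥ 3`, every skew-curvature tensor of the representation of
`so(n,ℂ)` on the symmetric matrices `⊙²ℂⁿ` (acting by `S ↦ [A,S]`) vanishes:
`𝓡̄(so(n,ℂ) acting on ⊙²ℂⁿ) = 0`. -/
theorem stmt10 (n : ℕ) (hn : 3 ≤ n)
    (R : symMat n →ₗ[ℂ] symMat n →ₗ[ℂ] Matrix (Fin n) (Fin n) ℂ)
    (hso : ∀ X Y : symMat n, (R X Y)ᵀ = -(R X Y))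
    (hsymm : ∀ X Y : symMat n, R X Y = R Y X)
    (hBianchi : ∀ X Y Z : symMat n,
      ⁅R X Y, (Z : Matrix (Fin n) (Fin n) ℂ)⁆
      + ⁅R Y Z, (X : Matrix (Fin n) (Fin n) ℂ)⁆
      + ⁅R Z X, (Y : Matrix (Fin n) (Fin n) ℂ)⁆ = 0) :
    R = 0 := by
  -- diagonal entries of values of R vanish by skew-symmetry
  have hdiag : ∀ (X Y : symMat n) (p : Fin n), R X Y p p = 0 := by
    intro X Y p
    have h := congrArg (fun M : Matrix (Fin n) (Fin n) ℂ => M p p) (hso X Y)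
    simp only [Matrix.transpose_apply, Matrix.neg_apply] at h
    linear_combination h / 2
  -- Step A : R vanishes on pairs of diagonal basis elements
  have hA : ∀ i j : Fin n, R (eD n i) (eD n j) = 0 := by
    intro i j
    ext p q
    rw [Matrix.zero_apply]
    by_cases hpq : p = q
    · subst hpq; exact hdiag _ _ p
    · have base : ∀ i' j' k' : Fin n,
          R (eD n i') (eD n j') p q * ((Pi.single k' (1 : ℂ) : Fin n → ℂ) q - (Pi.single k' (1 : ℂ) : Fin n → ℂ) p)
          + R (eD n j') (eD n k') p q * ((Pi.single i' (1 : ℂ) : Fin n → ℂ) q - (Pi.single i' (1 : ℂ) : Fin n → ℂ) p)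
          + R (eD n k') (eD n i') p q * ((Pi.single j' (1 : ℂ) : Fin n → ℂ) q - (Pi.single j' (1 : ℂ) : Fin n → ℂ) p)
            = 0 := by
        intro i' j' k'
        have H := congrArg (fun M : Matrix (Fin n) (Fin n) ℂ => M p q)
          (hBianchi (eD n i') (eD n j') (eD n k'))
        simpa only [Matrix.add_apply, Matrix.zero_apply, lieD] using H
      have h1 : R (eD n q) (eD n q) p q = 0 := by
        have h := base q q q
        simp only [Pi.single_eq_same, Pi.single_eq_of_ne hpq, sub_zero, mul_one] at h
        linear_combination h / 3
      have h3 : ∀ j', R (eD n j') (eD n q) p q = 0 := by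
        intro j'
        have h := base j' q q
        rw [hsymm (eD n q) (eD n j')] at h
        simp only [Pi.single_eq_same, Pi.single_eq_of_ne hpq, sub_zero, mul_one, h1,
          zero_mul, add_zero, zero_add] at h
        linear_combination h / 2
      have h := base i j q
      rw [hsymm (eD n q) (eD n i)] at h
      simp only [Pi.single_eq_same, Pi.single_eq_of_ne hpq, sub_zero, mul_one,
        h3 j, h3 i, zero_mul, add_zero, zero_add] at h
      exact h
  -- Step B : R X (eD k) = 0 for every symmetric X
  have hB : ∀ (X : symMat n) (k : Fin n), R X (eD n k) = 0 := by
    intro X k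
    ext p q
    rw [Matrix.zero_apply]
    by_cases hpq : p = q
    · subst hpq; exact hdiag _ _ p
    · have base : ∀ i' j' : Fin n,
          R X (eD n i') p q * ((Pi.single j' (1 : ℂ) : Fin n → ℂ) q - (Pi.single j' (1 : ℂ) : Fin n → ℂ) p)
          + R X (eD n j') p q * ((Pi.single i' (1 : ℂ) : Fin n → ℂ) q - (Pi.single i' (1 : ℂ) : Fin n → ℂ) p)
            = 0 := by
        intro i' j'
        have H := hBianchi X (eD n i') (eD n j')
        rw [hA i' j', hsymm (eD n j') X] at H
        have H2 := congrArg (fun M : Matrix (Fin n) (Fin n) ℂ => M p q) H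
        have hz : ⁅(0 : Matrix (Fin n) (Fin n) ℂ), (X : Matrix (Fin n) (Fin n) ℂ)⁆ = 0 := by
          simp [Ring.lie_def]
        simpa only [hz, zero_lie, add_zero, zero_add, Matrix.add_apply, Matrix.zero_apply,
          lieD] using H2
      have hq : R X (eD n q) p q = 0 := by
        have h := base q q
        simp only [Pi.single_eq_same, Pi.single_eq_of_ne hpq, sub_zero, mul_one] at h
        linear_combination h / 2
      have h := base k q
      simp only [Pi.single_eq_same, Pi.single_eq_of_ne hpq, sub_zero, mul_one, hq,
        zero_mul, add_zero, zero_add] at h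
      exact h
  -- Step C : R X Y = 0 for all X Y
  apply LinearMap.ext; intro X
  apply LinearMap.ext; intro Y
  show R X Y = 0
  have hcomm : ∀ k : Fin n,
      ⁅R X Y, ((eD n k : symMat n) : Matrix (Fin n) (Fin n) ℂ)⁆ = 0 := by
    intro k
    have H := hBianchi X Y (eD n k)
    rw [hB Y k, hsymm (eD n k) X, hB X k] at H
    simpa only [zero_lie, Ring.lie_def, zero_mul, mul_zero, sub_self, add_zero] using H
  ext p q
  rw [Matrix.zero_apply]
  by_cases hpq : p = q
  · subst hpq; exact hdiag _ _ p
  · have h := congrArg (fun M : Matrix (Fin n) (Fin n) ℂ => M p q) (hcomm q)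
    simp only [lieD, Matrix.zero_apply, Pi.single_eq_same, Pi.single_eq_of_ne hpq,
      sub_zero, mul_one] at h
    exact h
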